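/- Conversely, every unital left module X over S = R ⋉_n M arises as in the previous construction: restricting along the ring inclusion i : R → S makes X a left R-module, and the maps α_i : M_i ⊗_R X → X given by α_i(m_i ⊗ x) = (0,…,0,m_i,0,…,0)·x are R-linear and satisfy conditions (i) α_i ∘ (M_i ⊗ α_j) = 0 for i+j > n and (ii) α_{i+j} ∘ (Φ̃_{i,j} ⊗ id_X) = α_i ∘ (id_{M_i} ⊗ α_j) for i+j ≤ n; moreover the S-action is recovered as (a,m_1,…,m_n)·x = a·x + ∑_i α_i(m_i ⊗ x). -/

import Mathlib

/-! Preamble: the `n`-trivial extension ring `R ⋉ₙ M` of a ring `R` by a family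
`M = (M_i)_{1 ≤ i ≤ n}` of `R`-bimodules (a right `R`-action is encoded as a
`Rᵐᵒᵖ`-module structure) with associative bilinear pre-products
`Φ_{i,j} : M_i × M_j → M_{i+j}`. -/

namespace NTriv

variable (R : Type) [Ring R] (M : ℕ → Type)
variable [∀ i, AddCommGroup (M i)] [∀ i, Module R (M i)] [∀ i, Module Rᵐᵒᵖ (M i)]
variable [∀ i, SMulCommClass R Rᵐᵒᵖ (M i)]

/-- The extended family of abelian groups: index `0` is `R` itself, index `i+1` is `M (i+1)`. -/
def ExtFam : ℕ → Type
  | 0 => R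
  | i + 1 => M (i + 1)

instance : ∀ i, AddCommGroup (ExtFam R M i)
  | 0 => inferInstanceAs (AddCommGroup R)
  | i + 1 => inferInstanceAs (AddCommGroup (M (i + 1)))

instance : ∀ i, Module R (ExtFam R M i)
  | 0 => inferInstanceAs (Module R R)
  | i + 1 => inferInstanceAs (Module R (M (i + 1)))

instance : ∀ i, Module Rᵐᵒᵖ (ExtFam R M i)
  | 0 => inferInstanceAs (Module Rᵐᵒᵖ R)
  | i + 1 => inferInstanceAs (Module Rᵐᵒᵖ (M (i + 1)))

/-- Transport along an equality of indices. -/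
def ecast {i j : ℕ} (h : i = j) (x : ExtFam R M i) : ExtFam R M j := h ▸ x

/-- Transport along an equality of indices, for the family `M`. -/
def mcast {i j : ℕ} (h : i = j) (x : M i) : M j := h ▸ x

/-- Identification `ExtFam R M 0 = R`. -/
def toR (x : ExtFam R M 0) : R := x

/-- Identification `ExtFam R M (i+1) = M (i+1)`. -/
def toM {i : ℕ} (x : ExtFam R M (i + 1)) : M (i + 1) := x

/-- Identification `M (i+1) = ExtFam R M (i+1)`. -/
def ofM {i : ℕ} (x : M (i + 1)) : ExtFam R M (i + 1) := x

/-- The product on the extended family induced by the pre-products `Φ`: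
at index `0` it is the multiplication of `R`, and mixed products with index `0`
are given by the left and right `R`-module structures. -/
def extProd (Φ : ∀ i j, M i → M j → M (i + j)) :
    ∀ i j, ExtFam R M i → ExtFam R M j → ExtFam R M (i + j)
  | 0, 0, r, s => toR R M r * toR R M s
  | 0, j + 1, r, b => ofM R M (mcast (M := M) (by show j + 1 = 0 + j + 1; omega) (toR R M r • toM R M b))
  | i + 1, 0, a, r => ofM R M (MulOpposite.op (toR R M r) • toM R M a)
  | i + 1, j + 1, a, b => Φ (i + 1) (j + 1) (toM R M a) (toM R M b)

/-- The underlying additive group `R ⊕ M₁ ⊕ ⋯ ⊕ M_n` of the `n`-trivial extension. -/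
def Car (n : ℕ) := ∀ k : Fin (n + 1), ExtFam R M k

instance (n : ℕ) : AddCommGroup (Car R M n) := inferInstanceAs (AddCommGroup (∀ k : Fin (n+1), ExtFam R M k))

variable (n : ℕ)

/-- Extension of an element of the carrier to a function on all of `ℕ`, by zero. -/
def pad (x : Car R M n) (i : ℕ) : ExtFam R M i :=
  if h : i < n + 1 then x ⟨i, h⟩ else 0

/-- The multiplication of the `n`-trivial extension:
`((m_i)ᵢ ⬝ (m'_j)_j)_k = ∑_{i+j=k} m_i m'_j`. -/
def trivMul (Φ : ∀ i j, M i → M j → M (i + j)) (x y : Car R M n) : Car R M n :=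
  fun k => ∑ i ∈ Finset.range (n + 1),
    if h : i ≤ (k : ℕ) then
      ecast R M (by omega) (extProd R M Φ i ((k : ℕ) - i) (pad R M n x i) (pad R M n y ((k : ℕ) - i)))
    else 0

/-- `(1,0,…,0)` as a dependent function on `ℕ`. -/
def oneN : ∀ i : ℕ, ExtFam R M i
  | 0 => (1 : R)
  | _ + 1 => 0

/-- The identity element `(1,0,…,0)` of the `n`-trivial extension. -/
def trivOne : Car R M n := fun k => oneN R M k

end NTriv

namespace NTriv

variable (R : Type) [Ring R] (M : ℕ → Type)
variable [∀ i, AddCommGroup (M i)] [∀ i, Module R (M i)] [∀ i, Module Rᵐᵒᵖ (M i)]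
variable [∀ i, SMulCommClass R Rᵐᵒᵖ (M i)]
variable (n : ℕ)

/-- `r ∈ R` viewed as the element `(r, 0, …, 0)` of `R ⋉ₙ M`
(the canonical ring inclusion `i : R → S`). -/
def embR (r : R) : Car R M n := fun k =>
  if h : (k : ℕ) = 0 then ecast R M h.symm r else 0

/-- An element `m` of the `i`-th component viewed as `(0, …, 0, m, 0, …, 0)` in `R ⋉ₙ M`. -/
def embM (i : ℕ) (m : ExtFam R M i) : Car R M n := fun k =>
  if h : (k : ℕ) = i then ecast R M h.symm m else 0

set_option linter.unusedSectionVars false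

theorem ecast_zero {i j : ℕ} (h : i = j) : ecast R M h (0 : ExtFam R M i) = 0 := by
  subst h; rfl

theorem ecast_add {i j : ℕ} (h : i = j) (a b : ExtFam R M i) :
    ecast R M h (a + b) = ecast R M h a + ecast R M h b := by
  subst h; rfl

theorem ecast_id {i : ℕ} (h : i = i) (a : ExtFam R M i) : ecast R M h a = a := rfl

theorem mcast_zero {i j : ℕ} (h : i = j) : mcast (M := M) h (0 : M i) = 0 := by
  subst h; rfl

theorem mcast_heq {i j : ℕ} (h : i = j) (x : M i) : HEq (mcast (M := M) h x) x := by
  subst h; rfl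

theorem extProd_zero_left (Φ : ∀ i j, M i → M j → M (i + j))
    (hsl : ∀ i j (r : R) (a : M i) (b : M j), Φ i j (r • a) b = r • Φ i j a b)
    (i j : ℕ) (b : ExtFam R M j) : extProd R M Φ i j 0 b = 0 := by
  have key : ∀ i' j' (b' : M j'), Φ i' j' 0 b' = 0 := by
    intro i' j' b'
    have := hsl i' j' 0 0 b'
    simpa using this
  cases i <;> cases j
  · exact zero_mul (toR R M b)
  · show ofM R M (mcast (M := M) _ (toR R M (0 : ExtFam R M 0) • toM R M b)) = 0
    show ofM R M (mcast (M := M) _ ((0 : R) • toM R M b)) = 0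
    rw [zero_smul, mcast_zero]
    rfl
  · show ofM R M (MulOpposite.op (toR R M b) • toM R M (0 : ExtFam R M _)) = 0
    exact smul_zero _
  · exact key _ _ _

theorem extProd_zero_right (Φ : ∀ i j, M i → M j → M (i + j))
    (hsr : ∀ i j (r : Rᵐᵒᵖ) (a : M i) (b : M j), Φ i j a (r • b) = r • Φ i j a b)
    (i j : ℕ) (a : ExtFam R M i) : extProd R M Φ i j a 0 = 0 := by
  have key : ∀ i' j' (a' : M i'), Φ i' j' a' 0 = 0 := by
    intro i' j' a'
    have := hsr i' j' 0 a' 0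
    simpa using this
  cases i <;> cases j
  · exact mul_zero (toR R M a)
  · show ofM R M (mcast (M := M) _ (toR R M a • toM R M (0 : ExtFam R M _))) = 0
    rw [show toM R M (0 : ExtFam R M _) = 0 from rfl, smul_zero, mcast_zero]
    rfl
  · show ofM R M (MulOpposite.op (toR R M (0 : ExtFam R M 0)) • toM R M a) = 0
    show ofM R M (MulOpposite.op (0 : R) • toM R M a) = 0
    rw [MulOpposite.op_zero, zero_smul]
    rfl
  · exact key _ _ _

theorem pad_embM {i : ℕ} (hi : i ≤ n) (m : ExtFam R M i) (t : ℕ) :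
    pad R M n (embM R M n i m) t = if h : t = i then ecast R M h.symm m else 0 := by
  by_cases ht : t < n + 1
  · rw [pad, dif_pos ht]
    rfl
  · rw [pad, dif_neg ht, dif_neg (by omega)]

theorem ecast_extProd (Φ : ∀ i j, M i → M j → M (i + j))
    {i j d kv : ℕ} (hd : d = j) (pf : i + d = kv) (hk : kv = i + j)
    (a : ExtFam R M i) (b : ExtFam R M j) :
    ecast R M pf (extProd R M Φ i d a (ecast R M hd.symm b)) =
      ecast R M hk.symm (extProd R M Φ i j a b) := by
  subst hd; subst hk; rfl

theorem trivMul_emb (Φ : ∀ i j, M i → M j → M (i + j))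
    (hsl : ∀ i j (r : R) (a : M i) (b : M j), Φ i j (r • a) b = r • Φ i j a b)
    (hsr : ∀ i j (r : Rᵐᵒᵖ) (a : M i) (b : M j), Φ i j a (r • b) = r • Φ i j a b)
    {i j : ℕ} (hi : i ≤ n) (hj : j ≤ n) (hij : i + j ≤ n)
    (a : ExtFam R M i) (b : ExtFam R M j) :
    trivMul R M n Φ (embM R M n i a) (embM R M n j b)
      = embM R M n (i + j) (extProd R M Φ i j a b) := by
  funext k
  obtain ⟨kv, hkv⟩ := k
  show (∑ t ∈ Finset.range (n + 1), _) = _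
  rw [Finset.sum_eq_single i]
  · simp only [pad_embM R M n hi, pad_embM R M n hj]
    by_cases hk : kv = i + j
    · subst hk
      have h1 : i ≤ i + j := Nat.le_add_right i j
      have h2 : i + j - i = j := by omega
      rw [dif_pos h1, dif_pos (trivial : True), ecast_id, dif_pos h2,
        ecast_extProd R M Φ h2 _ rfl, embM, dif_pos rfl]
    · have hk' : ¬((⟨kv, hkv⟩ : Fin (n+1)) : ℕ) = i + j := hk
      rw [embM]
      rw [dif_neg hk']
      by_cases hik : i ≤ kv
      · have h3 : ¬(kv - i = j) := by omega
        rw [dif_pos hik, dif_pos (trivial : True), ecast_id, dif_neg h3,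
          extProd_zero_right R M Φ hsr, ecast_zero]
      · rw [dif_neg hik]
  · intro t _ ht
    simp only [pad_embM R M n hi, dif_neg ht, extProd_zero_left R M Φ hsl, ecast_zero,
      dite_eq_ite, ite_self]
  · intro h
    exact absurd (Finset.mem_range.mpr (by omega)) h

theorem trivMul_emb_zero (Φ : ∀ i j, M i → M j → M (i + j))
    (hsl : ∀ i j (r : R) (a : M i) (b : M j), Φ i j (r • a) b = r • Φ i j a b)
    (hsr : ∀ i j (r : Rᵐᵒᵖ) (a : M i) (b : M j), Φ i j a (r • b) = r • Φ i j a b)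
    {i j : ℕ} (hi : i ≤ n) (hj : j ≤ n) (hij : n < i + j)
    (a : ExtFam R M i) (b : ExtFam R M j) :
    trivMul R M n Φ (embM R M n i a) (embM R M n j b) = 0 := by
  funext k
  obtain ⟨kv, hkv⟩ := k
  show (∑ t ∈ Finset.range (n + 1), _) = _
  rw [Finset.sum_eq_single i]
  · simp only [pad_embM R M n hi, pad_embM R M n hj]
    by_cases hik : i ≤ kv
    · have h3 : ¬(kv - i = j) := by omega
      rw [dif_pos hik, dif_pos (trivial : True), ecast_id, dif_neg h3,
        extProd_zero_right R M Φ hsr, ecast_zero]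
      rfl
    · rw [dif_neg hik]
      rfl
  · intro t _ ht
    simp only [pad_embM R M n hi, dif_neg ht, extProd_zero_left R M Φ hsl, ecast_zero,
      dite_eq_ite, ite_self]
  · intro h
    exact absurd (Finset.mem_range.mpr (by omega)) h

theorem embM_eq_of_heq {i j : ℕ} (h : i = j) (x : ExtFam R M i) (y : ExtFam R M j)
    (hxy : HEq x y) : embM R M n i x = embM R M n j y := by
  subst h; cases hxy; rfl

theorem embR_one : embR R M n 1 = trivOne R M n := by
  funext k
  obtain ⟨kv, hkv⟩ := k
  cases kv <;> rfl

theorem embR_add (r r' : R) :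
    embR R M n (r + r') = embR R M n r + embR R M n r' := by
  funext k
  obtain ⟨kv, hkv⟩ := k
  cases kv with
  | zero => rfl
  | succ m =>
    exact (add_zero (0 : ExtFam R M (m + 1))).symm

theorem embM_add (i : ℕ) (m m' : ExtFam R M i) :
    embM R M n i (m + m') = embM R M n i m + embM R M n i m' := by
  funext k
  obtain ⟨kv, hkv⟩ := k
  show _ = embM R M n i m ⟨kv, hkv⟩ + embM R M n i m' ⟨kv, hkv⟩
  by_cases h : kv = i
  · subst h
    show dite _ _ _ = dite _ _ _ + dite _ _ _
    rw [dif_pos rfl, dif_pos rfl, dif_pos rfl, ecast_add]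
  · show dite _ _ _ = dite _ _ _ + dite _ _ _
    have h' : ¬((⟨kv, hkv⟩ : Fin (n+1)) : ℕ) = i := h
    rw [dif_neg h', dif_neg h', dif_neg h', add_zero]

theorem decomp (s : Car R M n) :
    s = embR R M n (toR R M (s ⟨0, Nat.succ_pos n⟩)) +
      ∑ i ∈ Finset.range n, embM R M n (i + 1) (pad R M n s (i + 1)) := by
  funext k
  obtain ⟨kv, hkv⟩ := k
  show s ⟨kv, hkv⟩ = embR R M n (toR R M (s ⟨0, Nat.succ_pos n⟩)) ⟨kv, hkv⟩ +
    (∑ i ∈ Finset.range n, embM R M n (i + 1) (pad R M n s (i + 1))) ⟨kv, hkv⟩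
  erw [Finset.sum_apply]
  cases kv with
  | zero =>
    rw [show (∑ i ∈ Finset.range n, embM R M n (i + 1) (pad R M n s (i + 1)) ⟨0, hkv⟩) = 0 by
      apply Finset.sum_eq_zero
      intro t _
      rw [embM, dif_neg (by omega : ¬(0 : ℕ) = t + 1)], add_zero]
    rfl
  | succ m =>
    have hm : m ∈ Finset.range n := Finset.mem_range.mpr (by omega)
    rw [show embR R M n (toR R M (s ⟨0, Nat.succ_pos n⟩)) ⟨m + 1, hkv⟩ = 0 by
      rw [embR, dif_neg (by omega : ¬(m + 1 : ℕ) = 0)], zero_add]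
    rw [Finset.sum_eq_single m]
    · rw [embM, dif_pos rfl, ecast_id, pad, dif_pos hkv]
    · intro t _ ht
      rw [embM, dif_neg (by omega : ¬(m + 1 : ℕ) = t + 1)]
    · intro h; exact absurd hm h
/-- Every unital left module `X` over `S = R ⋉ₙ M` (given by an action `σ`
satisfying the module axioms for the multiplication `trivMul Φ` and identity `trivOne`)
arises as in Statement 2: restriction along `i : R → S` (i.e. `r ⬝ x := σ (embR r) x`) makes
`X` a left `R`-module, the maps `αᵢ(mᵢ ⊗ x) := σ (0,…,0,mᵢ,0,…,0) x` are `R`-linear and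
balanced, they satisfy (i) `αᵢ ∘ (Mᵢ ⊗ α_j) = 0` for `i + j > n` and
(ii) `α_{i+j} ∘ (Φ̃_{i,j} ⊗ id) = αᵢ ∘ (id ⊗ α_j)` for `i + j ≤ n`, and the `S`-action is
recovered as `σ (a, m₁, …, m_n) x = a ⬝ x + ∑ᵢ αᵢ(mᵢ ⊗ x)`. -/
theorem statement_3
    (Φ : ∀ i j, M i → M j → M (i + j))
    (hadd_left : ∀ i j (a a' : M i) (b : M j), Φ i j (a + a') b = Φ i j a b + Φ i j a' b)
    (hadd_right : ∀ i j (a : M i) (b b' : M j), Φ i j a (b + b') = Φ i j a b + Φ i j a b')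
    (hsmul_left : ∀ i j (r : R) (a : M i) (b : M j), Φ i j (r • a) b = r • Φ i j a b)
    (hsmul_right : ∀ i j (r : Rᵐᵒᵖ) (a : M i) (b : M j), Φ i j a (r • b) = r • Φ i j a b)
    (hbalanced : ∀ i j (r : R) (a : M i) (b : M j),
      Φ i j (MulOpposite.op r • a) b = Φ i j a (r • b))
    (hassoc : ∀ i j k (a : M i) (b : M j) (c : M k),
      Φ (i + j) k (Φ i j a b) c = mcast (M := M) (add_assoc i j k).symm (Φ i (j + k) a (Φ j k b c)))
    (htriv : ∀ i, n < i → Subsingleton (M i))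
    (X : Type) [AddCommGroup X]
    -- `X` is a unital left `S`-module, with action `σ`:
    (σ : Car R M n → X → X)
    (hone : ∀ x, σ (trivOne R M n) x = x)
    (hmul : ∀ s t x, σ (trivMul R M n Φ s t) x = σ s (σ t x))
    (hadd₁ : ∀ s t x, σ (s + t) x = σ s x + σ t x)
    (hadd₂ : ∀ s x y, σ s (x + y) = σ s x + σ s y) :
    -- restriction of scalars along `i : R → S` makes `X` a left `R`-module:
    ((∀ x, σ (embR R M n 1) x = x) ∧
      (∀ (r r' : R) x, σ (embR R M n (r * r')) x = σ (embR R M n r) (σ (embR R M n r') x)) ∧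
      (∀ (r r' : R) x, σ (embR R M n (r + r')) x = σ (embR R M n r) x + σ (embR R M n r') x)) ∧
    -- each `αᵢ := σ (embM i ·)` is `R`-bilinear and balanced (`R`-linear on `Mᵢ ⊗_R X`):
    (∀ i, 1 ≤ i → i ≤ n →
      (∀ (m m' : ExtFam R M i) x, σ (embM R M n i (m + m')) x =
        σ (embM R M n i m) x + σ (embM R M n i m') x) ∧
      (∀ (r : R) (m : ExtFam R M i) x,
        σ (embM R M n i (r • m)) x = σ (embR R M n r) (σ (embM R M n i m) x)) ∧
      (∀ (r : R) (m : ExtFam R M i) x,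
        σ (embM R M n i (MulOpposite.op r • m)) x = σ (embM R M n i m) (σ (embR R M n r) x))) ∧
    -- condition (i):
    (∀ i j, 1 ≤ i → i ≤ n → 1 ≤ j → j ≤ n → n < i + j →
      ∀ (m : ExtFam R M i) (m' : ExtFam R M j) x,
        σ (embM R M n i m) (σ (embM R M n j m') x) = 0) ∧
    -- condition (ii):
    (∀ i j, 1 ≤ i → 1 ≤ j → i + j ≤ n →
      ∀ (m : ExtFam R M i) (m' : ExtFam R M j) x,
        σ (embM R M n (i + j) (extProd R M Φ i j m m')) x =
          σ (embM R M n i m) (σ (embM R M n j m') x)) ∧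
    -- the action is recovered by the formula of Statement 2:
    (∀ (s : Car R M n) x,
      σ s x = σ (embR R M n (toR R M (s ⟨0, Nat.succ_pos n⟩))) x +
        ∑ i ∈ Finset.range n, σ (embM R M n (i + 1) (pad R M n s (i + 1))) x) := by
  have hσ0 : ∀ x, σ 0 x = 0 := by
    intro x
    have h := hadd₁ 0 0 x
    rw [add_zero] at h
    exact (left_eq_add.mp h)
  refine ⟨⟨?_, ?_, ?_⟩, ?_, ?_, ?_, ?_⟩
  · intro x; rw [embR_one]; exact hone x
  · intro r r' x
    have h : trivMul R M n Φ (embR R M n r) (embR R M n r') = embR R M n (r * r') :=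
      trivMul_emb R M n Φ hsmul_left hsmul_right (Nat.zero_le n) (Nat.zero_le n)
        (Nat.zero_le n) r r'
    rw [← h, hmul]
  · intro r r' x
    rw [embR_add, hadd₁]
  · rintro i hi1 hin
    obtain ⟨i, rfl⟩ : ∃ i', i = i' + 1 := ⟨i - 1, by omega⟩
    refine ⟨fun m m' x => by rw [embM_add, hadd₁], ?_, ?_⟩
    · intro r m x
      have h : trivMul R M n Φ (embR R M n r) (embM R M n (i + 1) m)
          = embM R M n (i + 1) (r • m) := by
        refine (trivMul_emb R M n Φ hsmul_left hsmul_right (Nat.zero_le n) hin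
          (by omega) r m).trans ?_
        refine embM_eq_of_heq R M n (by omega) _ _ ?_
        exact mcast_heq (M := M) _ _
      rw [← h, hmul]
    · intro r m x
      have h : trivMul R M n Φ (embM R M n (i + 1) m) (embR R M n r)
          = embM R M n (i + 1) (MulOpposite.op r • m) := by
        refine (trivMul_emb R M n Φ hsmul_left hsmul_right hin (Nat.zero_le n)
          (by omega) m r).trans ?_
        exact embM_eq_of_heq R M n (by omega) _ _ HEq.rfl
      rw [← h, hmul]
  · intro i j hi1 hin hj1 hjn hnij m m' x
    rw [← hmul, trivMul_emb_zero R M n Φ hsmul_left hsmul_right hin hjn hnij]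
    exact hσ0 x
  · intro i j hi1 hj1 hij m m' x
    rw [← trivMul_emb R M n Φ hsmul_left hsmul_right (by omega) (by omega) hij m m', hmul]
  · intro s x
    conv_lhs => rw [decomp R M n s]
    rw [hadd₁]
    congr 1
    exact map_sum (AddMonoidHom.mk' (fun s => σ s x) (fun a b => hadd₁ a b x)) _ _

end NTriv
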